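/- (Proposition 1: nonexistence for diagonal D.) Assume m ≥ 2 and fix ε ∈ (0,1). For the (d_v, d_c, m) nonbinary LDPC ensemble functions f(·; ε) and g, there is no diagonal m×m matrix D with strictly positive diagonal entries for which there exist differentiable functions F, G : ℝ^m → ℝ with F(0) = 0, G(0) = 0, and gradients (as row vectors) F′(y) = f(y; ε)·D for all y ∈ Y and G′(x) = g(x)·D for all x ∈ Y. -/

import Mathlib

open scoped BigOperators

noncomputable section

/-- Number of `j`-dimensional subspaces `U` of `𝔽₂^m` whose intersection with `W`
has dimension `k`. -/
def numInter (m j k : ℕ) (W : Submodule (ZMod 2) (Fin m → ZMod 2)) : ℕ :=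
  Set.ncard {U : Submodule (ZMod 2) (Fin m → ZMod 2) |
    Module.finrank (ZMod 2) U = j ∧ Module.finrank (ZMod 2) ↥(U ⊓ W) = k}

/-- Number of `j`-dimensional subspaces `U` of `𝔽₂^m` whose sum with `W`
has dimension `k`. -/
def numSum (m j k : ℕ) (W : Submodule (ZMod 2) (Fin m → ZMod 2)) : ℕ :=
  Set.ncard {U : Submodule (ZMod 2) (Fin m → ZMod 2) |
    Module.finrank (ZMod 2) U = j ∧ Module.finrank (ZMod 2) ↥(U ⊔ W) = k}

/-- Number of `j`-dimensional subspaces of `𝔽₂^m`. -/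
def numDim (m j : ℕ) : ℕ :=
  Set.ncard {U : Submodule (ZMod 2) (Fin m → ZMod 2) | Module.finrank (ZMod 2) U = j}

/-- A canonical `i`-dimensional subspace of `𝔽₂^m` (for `i ≤ m`): vectors supported on
the first `i` coordinates. -/
def stdW (m i : ℕ) : Submodule (ZMod 2) (Fin m → ZMod 2) :=
  Submodule.span (ZMod 2) {x | ∀ t : Fin m, i ≤ (t : ℕ) → x t = 0}

/-- `V^m_{i,j,k}`: probability that a uniformly random `j`-dimensional subspace `U`
of `𝔽₂^m` satisfies `dim (U ⊓ W) = k`, for a fixed `i`-dimensional subspace `W`. -/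
def Vprob (m i j k : ℕ) : ℝ := (numInter m j k (stdW m i) : ℝ) / (numDim m j : ℝ)

/-- `C^m_{i,j,k}`: probability that a uniformly random `j`-dimensional subspace `U`
of `𝔽₂^m` satisfies `dim (U ⊔ W) = k`, for a fixed `i`-dimensional subspace `W`. -/
def Cprob (m i j k : ℕ) : ℝ := (numSum m j k (stdW m i) : ℝ) / (numDim m j : ℝ)

/-- The operation `⊡`. -/
def boxdot (m : ℕ) (a b : Fin (m+1) → ℝ) : Fin (m+1) → ℝ :=
  fun k => ∑ i : Fin (m+1), ∑ j : Fin (m+1), Vprob m i j k * a i * b j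

/-- The operation `⊠`. -/
def boxtimes (m : ℕ) (a b : Fin (m+1) → ℝ) : Fin (m+1) → ℝ :=
  fun k => ∑ i : Fin (m+1), ∑ j : Fin (m+1), Cprob m i j k * a i * b j

/-- `boxdotPow m n a = ⊡^{n+1} a` (the `(n+1)`-fold `⊡`-product of `a` with itself). -/
def boxdotPow (m : ℕ) : ℕ → (Fin (m+1) → ℝ) → (Fin (m+1) → ℝ)
  | 0, a => a
  | n+1, a => boxdot m a (boxdotPow m n a)

/-- `boxtimesPow m n a = ⊠^{n+1} a` (the `(n+1)`-fold `⊠`-product of `a` with itself). -/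
def boxtimesPow (m : ℕ) : ℕ → (Fin (m+1) → ℝ) → (Fin (m+1) → ℝ)
  | 0, a => a
  | n+1, a => boxtimes m a (boxtimesPow m n a)

/-- `p∘(ε)`. -/
def pcirc (m : ℕ) (ε : ℝ) : Fin (m+1) → ℝ :=
  fun i => (m.choose i : ℝ) * ε ^ (i : ℕ) * (1 - ε) ^ (m - (i : ℕ))

/-- `f∘(y∘; ε) = p∘(ε) ⊡ (⊡^{d_v − 1} y∘)`. -/
def fcirc (m dv : ℕ) (ε : ℝ) (y : Fin (m+1) → ℝ) : Fin (m+1) → ℝ :=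
  boxdot m (pcirc m ε) (boxdotPow m (dv - 2) y)

/-- `g∘(x∘) = ⊠^{d_c − 1} x∘`. -/
def gcirc (m dc : ℕ) (x : Fin (m+1) → ℝ) : Fin (m+1) → ℝ :=
  boxtimesPow m (dc - 2) x

/-- Extension of `x ∈ ℝ^m` (indexed `1,…,m`) to `ℕ` with conventions `x_0 = 1`,
`x_i = 0` for `i > m`. -/
def extSeq (m : ℕ) (x : Fin m → ℝ) : ℕ → ℝ :=
  fun i => if _h0 : i = 0 then 1 else if h : i ≤ m then x ⟨i - 1, by omega⟩ else 0

/-- `x̃ ∈ ℝ^{m+1}` with `x̃_i = x_i − x_{i+1}`. -/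
def tilde (m : ℕ) (x : Fin m → ℝ) : Fin (m+1) → ℝ :=
  fun i => extSeq m x i - extSeq m x ((i : ℕ) + 1)

/-- `f(y; ε)_i = Σ_{k=i}^m f∘(ỹ; ε)_k` (here `i : Fin m` denotes the index `i+1 ∈ {1,…,m}`). -/
def fFun (m dv : ℕ) (ε : ℝ) (y : Fin m → ℝ) : Fin m → ℝ :=
  fun i => ∑ k : Fin (m+1), if (i : ℕ) + 1 ≤ (k : ℕ) then fcirc m dv ε (tilde m y) k else 0

/-- `g(x)_i = Σ_{k=i}^m g∘(x̃)_k`. -/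
def gFun (m dc : ℕ) (x : Fin m → ℝ) : Fin m → ℝ :=
  fun i => ∑ k : Fin (m+1), if (i : ℕ) + 1 ≤ (k : ℕ) then gcirc m dc (tilde m x) k else 0

/-- `p(ε)_i = Σ_{k=i}^m p∘_k(ε)`. -/
def pFun (m : ℕ) (ε : ℝ) : Fin m → ℝ :=
  fun i => ∑ k : Fin (m+1), if (i : ℕ) + 1 ≤ (k : ℕ) then pcirc m ε k else 0

/-- `X_ε = {x ∈ ℝ^m : 0 ≤ x_i ≤ p(ε)_i}`. -/
def Xset (m : ℕ) (ε : ℝ) : Set (Fin m → ℝ) := {x | ∀ i, 0 ≤ x i ∧ x i ≤ pFun m ε i}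

/-- `Y = [0,1]^m`. -/
def Yset (m : ℕ) : Set (Fin m → ℝ) := {y | ∀ i, 0 ≤ y i ∧ y i ≤ 1}

/-- The continuous linear map `v ↦ Σ_s c_s v_s`, i.e. the row vector `c` viewed as a
linear functional; used to express gradients. -/
def rowDeriv (m : ℕ) (c : Fin m → ℝ) : (Fin m → ℝ) →L[ℝ] ℝ :=
  ∑ s : Fin m, c s • (ContinuousLinearMap.proj s : (Fin m → ℝ) →L[ℝ] ℝ)

/-- The potential function `U(x; ε) = g(x) D xᵀ − G(x) − F(g(x); ε)` (with `ε` fixed,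
absorbed into `F`). -/
def Upot (m dc : ℕ) (D : Matrix (Fin m) (Fin m) ℝ) (F G : (Fin m → ℝ) → ℝ)
    (x : Fin m → ℝ) : ℝ :=
  (∑ a : Fin m, ∑ b : Fin m, gFun m dc x a * D a b * x b) - G x - F (gFun m dc x)

instance instFinSub (m : ℕ) : Finite (Submodule (ZMod 2) (Fin m → ZMod 2)) :=
  Finite.of_injective (fun U => (U : Set (Fin m → ZMod 2))) SetLike.coe_injective

def stdW' (m i : ℕ) : Submodule (ZMod 2) (Fin m → ZMod 2) where
  carrier := {x | ∀ t : Fin m, i ≤ (t : ℕ) → x t = 0}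
  add_mem' := by intro a b ha hb t ht; simp [Set.mem_setOf_eq] at *; simp [ha t ht, hb t ht]
  zero_mem' := by intro t ht; rfl
  smul_mem' := by intro c x hx t ht; simp [Set.mem_setOf_eq] at *; simp [hx t ht]

lemma stdW_eq (m i : ℕ) : stdW m i = stdW' m i := Submodule.span_eq (stdW' m i)

def stdWEquiv (m i : ℕ) (him : i ≤ m) : (stdW' m i) ≃ₗ[ZMod 2] (Fin i → ZMod 2) where
  toFun x := fun t => x.1 ⟨t.1, lt_of_lt_of_le t.2 him⟩
  invFun y := ⟨fun t => if h : (t : ℕ) < i then y ⟨t, h⟩ else 0, by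
    intro t ht; simp only; rw [dif_neg (by omega)]⟩
  map_add' x y := rfl
  map_smul' c x := rfl
  left_inv := by
    rintro ⟨x, hx⟩
    ext t
    simp only
    by_cases h : (t : ℕ) < i
    · rw [dif_pos h]
    · rw [dif_neg h]; exact (hx t (by omega)).symm
  right_inv := by
    intro y; ext t; simp [t.2]

lemma finrank_stdW (m i : ℕ) (him : i ≤ m) :
    Module.finrank (ZMod 2) (stdW m i) = i := by
  rw [stdW_eq]
  rw [(stdWEquiv m i him).finrank_eq, Module.finrank_pi, Fintype.card_fin]

lemma finrank_total (m : ℕ) : Module.finrank (ZMod 2) (Fin m → ZMod 2) = m := by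
  rw [Module.finrank_pi, Fintype.card_fin]

lemma stdW_top (m : ℕ) : stdW m m = ⊤ := by
  rw [stdW_eq]
  rw [eq_top_iff]
  intro x _
  intro t ht
  exact absurd t.2 (by omega)

lemma finrank_eq_top (m : ℕ) {U : Submodule (ZMod 2) (Fin m → ZMod 2)}
    (h : Module.finrank (ZMod 2) U = m) : U = ⊤ :=
  Submodule.eq_top_of_finrank_eq (by rw [h, finrank_total])

lemma numDim_self (m : ℕ) : numDim m m = 1 := by
  unfold numDim
  have : {U : Submodule (ZMod 2) (Fin m → ZMod 2) | Module.finrank (ZMod 2) U = m} = {⊤} := by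
    ext U
    simp only [Set.mem_setOf_eq, Set.mem_singleton_iff]
    constructor
    · exact finrank_eq_top m
    · rintro rfl; rw [finrank_top, finrank_total]
  rw [this, Set.ncard_singleton]

lemma numDim_pos (m j : ℕ) (hj : j ≤ m) : 0 < numDim m j := by
  unfold numDim
  rw [Set.ncard_pos (Set.toFinite _)]
  exact ⟨stdW m j, finrank_stdW m j hj⟩

lemma numInter_high (m j k : ℕ) (W : Submodule (ZMod 2) (Fin m → ZMod 2)) (h : j < k) :
    numInter m j k W = 0 := by
  unfold numInter
  have hset : {U : Submodule (ZMod 2) (Fin m → ZMod 2) |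
      Module.finrank (ZMod 2) U = j ∧ Module.finrank (ZMod 2) ↥(U ⊓ W) = k} = ∅ := by
    ext U
    simp only [Set.mem_setOf_eq, Set.mem_empty_iff_false, iff_false]
    rintro ⟨h1, h2⟩
    have : Module.finrank (ZMod 2) ↥(U ⊓ W) ≤
        Module.finrank (ZMod 2) U := Submodule.finrank_mono inf_le_left
    omega
  rw [hset, Set.ncard_empty]

lemma numInter_full (m k i : ℕ) (hi : i ≤ m) :
    numInter m m k (stdW m i) = if k = i then 1 else 0 := by
  unfold numInter
  by_cases hk : k = i
  · subst hk
    rw [if_pos rfl]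
    have hset : {U : Submodule (ZMod 2) (Fin m → ZMod 2) |
        Module.finrank (ZMod 2) U = m ∧ Module.finrank (ZMod 2) ↥(U ⊓ stdW m k) = k}
        = {⊤} := by
      ext U
      simp only [Set.mem_setOf_eq, Set.mem_singleton_iff]
      constructor
      · rintro ⟨h1, _⟩; exact finrank_eq_top m h1
      · rintro rfl
        refine ⟨by rw [finrank_top, finrank_total], ?_⟩
        rw [top_inf_eq, finrank_stdW m k hi]
    rw [hset, Set.ncard_singleton]
  · rw [if_neg hk]
    have hset : {U : Submodule (ZMod 2) (Fin m → ZMod 2) |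
        Module.finrank (ZMod 2) U = m ∧ Module.finrank (ZMod 2) ↥(U ⊓ stdW m i) = k}
        = ∅ := by
      ext U
      simp only [Set.mem_setOf_eq, Set.mem_empty_iff_false, iff_false]
      rintro ⟨h1, h2⟩
      have := finrank_eq_top m h1
      subst this
      rw [top_inf_eq, finrank_stdW m i hi] at h2
      exact hk h2.symm
    rw [hset, Set.ncard_empty]

lemma numInter_topW (m j k : ℕ) :
    numInter m j k ⊤ = if j = k then numDim m j else 0 := by
  unfold numInter numDim
  by_cases hjk : j = k
  · subst hjk
    rw [if_pos rfl]
    congr 1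
    ext U
    simp only [Set.mem_setOf_eq]
    constructor
    · rintro ⟨h1, _⟩; exact h1
    · intro h1; exact ⟨h1, by rw [inf_top_eq]; exact h1⟩
  · rw [if_neg hjk]
    have hset : {U : Submodule (ZMod 2) (Fin m → ZMod 2) |
        Module.finrank (ZMod 2) U = j ∧ Module.finrank (ZMod 2) ↥(U ⊓ ⊤) = k} = ∅ := by
      ext U
      simp only [inf_top_eq, Set.mem_setOf_eq, Set.mem_empty_iff_false, iff_false]
      rintro ⟨h1, h2⟩
      rw [inf_top_eq] at h2
      omega
    rw [hset, Set.ncard_empty]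

lemma numInter_m1 (m i : ℕ) (hm : 2 ≤ m) (hi : i ≤ m) :
    numInter m (m-1) (m-1) (stdW m i) =
      if i = m then numDim m (m-1) else if i = m-1 then 1 else 0 := by
  by_cases him : i = m
  · subst him
    rw [if_pos rfl, stdW_top, numInter_topW, if_pos rfl]
  rw [if_neg him]
  unfold numInter
  have hrkW : Module.finrank (ZMod 2) (stdW m i) = i := finrank_stdW m i hi
  by_cases hi1 : i = m - 1
  · subst hi1
    rw [if_pos rfl]
    have hset : {U : Submodule (ZMod 2) (Fin m → ZMod 2) |
        Module.finrank (ZMod 2) U = m - 1 ∧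
          Module.finrank (ZMod 2) ↥(U ⊓ stdW m (m-1)) = m - 1} = {stdW m (m-1)} := by
      ext U
      simp only [Set.mem_setOf_eq, Set.mem_singleton_iff]
      constructor
      · rintro ⟨h1, h2⟩
        have hle : U ⊓ stdW m (m-1) ≤ U := inf_le_left
        have hUW : U ⊓ stdW m (m-1) = U :=
          Submodule.eq_of_le_of_finrank_le hle (by rw [h2, h1])
        have hU : U ≤ stdW m (m-1) := by rw [← hUW]; exact inf_le_right
        exact (Submodule.eq_of_le_of_finrank_le hU (by rw [hrkW, h1]))
      · rintro rfl
        exact ⟨hrkW, by rw [inf_idem, hrkW]⟩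
    rw [hset, Set.ncard_singleton]
  · rw [if_neg hi1]
    have hset : {U : Submodule (ZMod 2) (Fin m → ZMod 2) |
        Module.finrank (ZMod 2) U = m - 1 ∧
          Module.finrank (ZMod 2) ↥(U ⊓ stdW m i) = m - 1} = ∅ := by
      ext U
      simp only [Set.mem_setOf_eq, Set.mem_empty_iff_false, iff_false]
      rintro ⟨h1, h2⟩
      have : Module.finrank (ZMod 2) ↥(U ⊓ stdW m i) ≤
          Module.finrank (ZMod 2) (stdW m i) := Submodule.finrank_mono inf_le_right
      rw [h2, hrkW] at this
      omega
    rw [hset, Set.ncard_empty]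

lemma numDim_two (m : ℕ) (hm : 2 ≤ m) : 2 ≤ numDim m (m-1) := by
  classical
  have hproj : ∀ c : Fin m, Module.finrank (ZMod 2)
      (LinearMap.ker (LinearMap.proj c :
        (Fin m → ZMod 2) →ₗ[ZMod 2] ZMod 2)) = m - 1 := by
    intro c
    have hsurj : Function.Surjective (LinearMap.proj c :
        (Fin m → ZMod 2) →ₗ[ZMod 2] ZMod 2) := by
      intro z; exact ⟨Pi.single c z, by simp [LinearMap.proj_apply]⟩
    have h1 := LinearMap.finrank_range_add_finrank_ker
      (LinearMap.proj c : (Fin m → ZMod 2) →ₗ[ZMod 2] ZMod 2)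
    rw [finrank_total, LinearMap.range_eq_top.mpr hsurj, finrank_top,
      Module.finrank_self] at h1
    omega
  set c0 : Fin m := ⟨0, by omega⟩
  set c1 : Fin m := ⟨1, by omega⟩
  have hne : (LinearMap.ker (LinearMap.proj c0 :
      (Fin m → ZMod 2) →ₗ[ZMod 2] ZMod 2)) ≠
      (LinearMap.ker (LinearMap.proj c1 : (Fin m → ZMod 2) →ₗ[ZMod 2] ZMod 2)) := by
    intro h
    have hx : (Pi.single c0 (1:ZMod 2)) ∈
        LinearMap.ker (LinearMap.proj c1 : (Fin m → ZMod 2) →ₗ[ZMod 2] ZMod 2) := by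
      simp only [LinearMap.mem_ker, LinearMap.proj_apply]
      rw [Pi.single_eq_of_ne (by simp [c0, c1, Fin.ext_iff]) 1]
    rw [← h] at hx
    simp only [LinearMap.mem_ker, LinearMap.proj_apply] at hx
    rw [Pi.single_eq_same] at hx
    exact one_ne_zero hx
  unfold numDim
  rw [Nat.succ_le_iff]
  rw [Set.one_lt_ncard (Set.toFinite _)]
  exact ⟨_, hproj c0, _, hproj c1, hne⟩

lemma Vprob_full (m i k : ℕ) (hi : i ≤ m) :
    Vprob m i m k = if k = i then 1 else 0 := by
  unfold Vprob
  rw [numInter_full m k i hi, numDim_self]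
  by_cases h : k = i <;> simp [h]

lemma Vprob_left (m j k : ℕ) (hj : j ≤ m) :
    Vprob m m j k = if j = k then 1 else 0 := by
  unfold Vprob
  rw [stdW_top, numInter_topW]
  have hne : (numDim m j : ℝ) ≠ 0 := by
    have := numDim_pos m j hj
    positivity
  by_cases h : j = k
  · subst h; rw [if_pos rfl, if_pos rfl, div_self hne]
  · rw [if_neg h, if_neg h, Nat.cast_zero, zero_div]

lemma Vprob_high (m i j k : ℕ) (h : j < k) : Vprob m i j k = 0 := by
  unfold Vprob
  rw [numInter_high m j k _ h]
  simp

lemma Vprob_m1 (m i : ℕ) (hm : 2 ≤ m) (hi : i ≤ m) :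
    Vprob m i (m-1) (m-1) =
      if i = m then 1 else if i = m - 1 then ((numDim m (m-1) : ℝ))⁻¹ else 0 := by
  unfold Vprob
  rw [numInter_m1 m i hm hi]
  have hpos : 0 < numDim m (m-1) := numDim_pos m (m-1) (by omega)
  by_cases h1 : i = m
  · rw [if_pos h1, if_pos h1]
    field_simp
  · rw [if_neg h1, if_neg h1]
    by_cases h2 : i = m - 1
    · rw [if_pos h2, if_pos h2]
      simp [one_div]
    · rw [if_neg h2, if_neg h2]
      simp

def eVec (m : ℕ) : Fin (m+1) → ℝ := fun k => if (k : ℕ) = m then 1 else 0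

lemma boxdot_em_right (m : ℕ) (a : Fin (m+1) → ℝ) : boxdot m a (eVec m) = a := by
  funext k
  unfold boxdot
  have hstep : ∀ i : Fin (m+1), ∑ j : Fin (m+1), Vprob m i j k * a i * eVec m j
      = Vprob m i m k * a i := by
    intro i
    rw [Finset.sum_eq_single (Fin.last m)]
    · simp [eVec, Fin.val_last]
    · intro j _ hj
      have : (j : ℕ) ≠ m := fun h => hj (Fin.ext (by simp [Fin.val_last, h]))
      simp [eVec, this]
    · simp
  rw [Finset.sum_congr rfl (fun i _ => hstep i)]
  have hstep2 : ∀ i : Fin (m+1), Vprob m i m k * a i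
      = if i = k then a k else 0 := by
    intro i
    rw [Vprob_full m i k (by omega)]
    by_cases h : (k : ℕ) = (i : ℕ)
    · rw [if_pos h, if_pos (Fin.ext h.symm : i = k), one_mul]
      congr 1
      exact Fin.ext h.symm
    · rw [if_neg h, if_neg (fun hh => h (by rw [hh]) : ¬ i = k), zero_mul]
  rw [Finset.sum_congr rfl (fun i _ => hstep2 i), Finset.sum_ite_eq' Finset.univ k]
  simp

lemma boxdot_em_left (m : ℕ) (b : Fin (m+1) → ℝ) : boxdot m (eVec m) b = b := by
  funext k
  unfold boxdot
  rw [Finset.sum_eq_single (Fin.last m)]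
  · have : ∀ j : Fin (m+1), Vprob m (Fin.last m) j k * eVec m (Fin.last m) * b j
        = if j = k then b k else 0 := by
      intro j
      have hv : Vprob m (Fin.last m : Fin (m+1)) j k = if (j:ℕ) = (k:ℕ) then 1 else 0 := by
        rw [Fin.val_last, Vprob_left m j k (by omega)]
      rw [hv]
      by_cases h : (j : ℕ) = (k : ℕ)
      · rw [if_pos h, if_pos (Fin.ext h : j = k)]
        simp [eVec, Fin.val_last]
        exact congrArg b (Fin.ext h)
      · rw [if_neg h, if_neg (fun hh => h (by rw [hh]) : ¬ j = k)]
        simp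
    rw [Finset.sum_congr rfl (fun j _ => this j), Finset.sum_ite_eq' Finset.univ k]
    simp
  · intro i _ hi
    have : (i : ℕ) ≠ m := fun h => hi (Fin.ext (by simp [Fin.val_last, h]))
    simp [eVec, this]
  · simp

lemma boxdotPow_em (m n : ℕ) : boxdotPow m n (eVec m) = eVec m := by
  induction n with
  | zero => rfl
  | succ n ih => show boxdot m (eVec m) (boxdotPow m n (eVec m)) = eVec m; rw [ih, boxdot_em_left]

open ContinuousLinearMap in
lemma hasFDerivAt_boxdot_comp (m : ℕ) {f g : (Fin (m+1) → ℝ) → (Fin (m+1) → ℝ)}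
    {f' g' : (Fin (m+1) → ℝ) →L[ℝ] (Fin (m+1) → ℝ)} {x : Fin (m+1) → ℝ}
    (hf : HasFDerivAt f f' x) (hg : HasFDerivAt g g' x) :
    HasFDerivAt (fun a => boxdot m (f a) (g a))
      (ContinuousLinearMap.pi (R := ℝ) (fun k => ∑ i : Fin (m+1), ∑ j : Fin (m+1),
        Vprob m i j k • (f x i • ((proj j : (Fin (m+1) → ℝ) →L[ℝ] ℝ).comp g')
          + g x j • ((proj i : (Fin (m+1) → ℝ) →L[ℝ] ℝ).comp f')))) x := by
  apply hasFDerivAt_pi''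
  intro k
  rw [ContinuousLinearMap.proj_pi]
  have hterm : ∀ i ∈ (Finset.univ : Finset (Fin (m+1))), ∀ j ∈ (Finset.univ : Finset (Fin (m+1))),
      HasFDerivAt (fun a => Vprob m i j k * (f a i * g a j))
        (Vprob m i j k • (f x i • ((proj j : (Fin (m+1) → ℝ) →L[ℝ] ℝ).comp g')
          + g x j • ((proj i : (Fin (m+1) → ℝ) →L[ℝ] ℝ).comp f'))) x := by
    intro i _ j _
    exact ((hasFDerivAt_pi'.1 hf i).mul (hasFDerivAt_pi'.1 hg j)).const_mul _
  have hsum : HasFDerivAt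
      (fun a => ∑ i : Fin (m+1), ∑ j : Fin (m+1), Vprob m i j k * (f a i * g a j))
      (∑ i : Fin (m+1), ∑ j : Fin (m+1),
        Vprob m i j k • (f x i • ((proj j : (Fin (m+1) → ℝ) →L[ℝ] ℝ).comp g')
          + g x j • ((proj i : (Fin (m+1) → ℝ) →L[ℝ] ℝ).comp f'))) x :=
    HasFDerivAt.fun_sum (fun i hi => HasFDerivAt.fun_sum (fun j hj => hterm i hi j hj))
  have : (fun a => boxdot m (f a) (g a) k)
      = (fun a => ∑ i : Fin (m+1), ∑ j : Fin (m+1), Vprob m i j k * (f a i * g a j)) := by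
    funext a
    unfold boxdot
    exact Finset.sum_congr rfl fun i _ => Finset.sum_congr rfl fun j _ => (mul_assoc _ _ _)
  rw [this]
  exact hsum

open ContinuousLinearMap in
lemma hasFDerivAt_boxdotPow (m n : ℕ) :
    HasFDerivAt (boxdotPow m n)
      (((n : ℝ)+1) • ContinuousLinearMap.id ℝ (Fin (m+1) → ℝ)) (eVec m) := by
  induction n with
  | zero =>
    have h0 : boxdotPow m 0 = fun a : Fin (m+1) → ℝ => a := rfl
    rw [h0]
    simpa using hasFDerivAt_id (𝕜 := ℝ) (eVec m)
  | succ n ih =>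
    have h := hasFDerivAt_boxdot_comp m (hasFDerivAt_id (𝕜 := ℝ) (eVec m)) ih
    have hfun : (boxdotPow m (n+1))
        = (fun a => boxdot m (id a) (boxdotPow m n a)) := rfl
    rw [hfun]
    convert h using 1
    case e'_9 => rfl
    refine ContinuousLinearMap.ext fun v => funext fun k => ?_
    simp only [ContinuousLinearMap.smul_apply, ContinuousLinearMap.id_apply,
      ContinuousLinearMap.pi_apply, ContinuousLinearMap.sum_apply,
      ContinuousLinearMap.add_apply, ContinuousLinearMap.coe_comp', Function.comp_apply,
      ContinuousLinearMap.proj_apply, Pi.smul_apply, smul_eq_mul, boxdotPow_em, id_eq]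
    have hterm : ∀ i j : Fin (m+1),
        Vprob m i j k * (eVec m i * (((n:ℝ)+1) * v j) + eVec m j * v i)
          = ((n:ℝ)+1) * (Vprob m i j k * eVec m i * v j)
            + Vprob m i j k * v i * eVec m j := by
      intro i j; ring
    rw [Finset.sum_congr rfl fun i _ => Finset.sum_congr rfl fun j _ => hterm i j]
    have hsplit : ∑ i : Fin (m+1), ∑ j : Fin (m+1),
        (((n:ℝ)+1) * (Vprob m i j k * eVec m i * v j)
          + Vprob m i j k * v i * eVec m j)
        = ((n:ℝ)+1) * (∑ i : Fin (m+1), ∑ j : Fin (m+1), Vprob m i j k * eVec m i * v j)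
          + ∑ i : Fin (m+1), ∑ j : Fin (m+1), Vprob m i j k * v i * eVec m j := by
      rw [Finset.mul_sum]
      rw [← Finset.sum_add_distrib]
      refine Finset.sum_congr rfl fun i _ => ?_
      rw [Finset.mul_sum, ← Finset.sum_add_distrib]
    rw [hsplit]
    have h1 : (∑ i : Fin (m+1), ∑ j : Fin (m+1), Vprob m i j k * eVec m i * v j)
        = v k := by
      have := congrFun (boxdot_em_left m v) k
      exact this
    have h2 : (∑ i : Fin (m+1), ∑ j : Fin (m+1), Vprob m i j k * v i * eVec m j)
        = v k := by
      have := congrFun (boxdot_em_right m v) k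
      exact this
    rw [h1, h2]
    push_cast
    ring

lemma tilde_one (m : ℕ) : tilde m (fun _ => 1) = eVec m := by
  funext i
  have hi : (i : ℕ) ≤ m := by omega
  unfold tilde extSeq eVec
  by_cases h : (i : ℕ) = m
  · rw [if_pos h]
    rcases Nat.eq_zero_or_pos m with hm | hm
    · rw [dif_pos (by omega), dif_neg (by omega), dif_neg (by omega)]
      ring
    · by_cases h0 : (i : ℕ) = 0
      · rw [dif_pos h0, dif_neg (by omega), dif_neg (by omega)]
        ring
      · rw [dif_neg h0, dif_pos hi, dif_neg (by omega), dif_neg (by omega)]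
        ring
  · rw [if_neg h]
    have hlt : (i : ℕ) < m := by omega
    by_cases h0 : (i : ℕ) = 0
    · rw [dif_pos h0, dif_neg (by omega), dif_pos (by omega)]
      ring
    · rw [dif_neg h0, dif_pos hi, dif_neg (by omega), dif_pos (by omega)]
      ring

def dex (m : ℕ) (j : ℕ) : (Fin m → ℝ) →L[ℝ] ℝ :=
  if h : 1 ≤ j ∧ j ≤ m then
    (ContinuousLinearMap.proj (R := ℝ) (φ := fun _ : Fin m => ℝ) ⟨j-1, by omega⟩) else 0

def Tlin (m : ℕ) : (Fin m → ℝ) →L[ℝ] (Fin (m+1) → ℝ) :=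
  ContinuousLinearMap.pi (R := ℝ) (fun i : Fin (m+1) => dex m (i : ℕ) - dex m ((i : ℕ)+1))

lemma hasFDerivAt_extSeq (m j : ℕ) (y : Fin m → ℝ) :
    HasFDerivAt (fun z => extSeq m z j) (dex m j) y := by
  unfold extSeq dex
  by_cases h0 : j = 0
  · subst h0
    rw [dif_neg (by omega)]
    simpa using hasFDerivAt_const (1:ℝ) y
  · by_cases hm : j ≤ m
    · rw [dif_pos ⟨by omega, hm⟩]
      have : (fun z : Fin m → ℝ => if _h0 : j = 0 then (1:ℝ) else if h : j ≤ m then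
          z ⟨j - 1, by omega⟩ else 0) = fun z => z ⟨j-1, by omega⟩ := by
        funext z
        rw [dif_neg h0, dif_pos hm]
      rw [this]
      exact hasFDerivAt_apply (𝕜 := ℝ) _ y
    · rw [dif_neg (by omega)]
      have : (fun z : Fin m → ℝ => if _h0 : j = 0 then (1:ℝ) else if h : j ≤ m then
          z ⟨j - 1, by omega⟩ else 0) = fun _ => 0 := by
        funext z
        rw [dif_neg h0, dif_neg hm]
      rw [this]
      simpa using hasFDerivAt_const (0:ℝ) y

lemma hasFDerivAt_tilde (m : ℕ) (y : Fin m → ℝ) :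
    HasFDerivAt (tilde m) (Tlin m) y := by
  apply hasFDerivAt_pi''
  intro i
  rw [Tlin, ContinuousLinearMap.proj_pi]
  exact (hasFDerivAt_extSeq m i y).sub (hasFDerivAt_extSeq m ((i:ℕ)+1) y)

def Bp (m : ℕ) (ε : ℝ) : (Fin (m+1) → ℝ) →L[ℝ] (Fin (m+1) → ℝ) :=
  ContinuousLinearMap.pi (R := ℝ) (fun k => ∑ i : Fin (m+1), ∑ j : Fin (m+1),
    (Vprob m i j k * pcirc m ε i) • ContinuousLinearMap.proj j)

lemma Bp_apply (m : ℕ) (ε : ℝ) (b : Fin (m+1) → ℝ) :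
    Bp m ε b = boxdot m (pcirc m ε) b := by
  funext k
  simp only [Bp, ContinuousLinearMap.pi_apply, ContinuousLinearMap.sum_apply,
    ContinuousLinearMap.smul_apply, ContinuousLinearMap.proj_apply, smul_eq_mul, boxdot]

def Ssum (m : ℕ) (s : Fin m) : (Fin (m+1) → ℝ) →L[ℝ] ℝ :=
  ∑ k : Fin (m+1), (if (s:ℕ)+1 ≤ (k:ℕ) then (1:ℝ) else 0) • ContinuousLinearMap.proj k

lemma Ssum_apply (m : ℕ) (s : Fin m) (c : Fin (m+1) → ℝ) :
    Ssum m s c = ∑ k : Fin (m+1), (if (s:ℕ)+1 ≤ (k:ℕ) then c k else 0) := by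
  simp only [Ssum, ContinuousLinearMap.sum_apply, ContinuousLinearMap.smul_apply,
    ContinuousLinearMap.proj_apply, smul_eq_mul]
  exact Finset.sum_congr rfl fun k _ => by split <;> simp

def Lder (m dv : ℕ) (ε : ℝ) (s : Fin m) : (Fin m → ℝ) →L[ℝ] ℝ :=
  ((Ssum m s).comp ((Bp m ε).comp
    ((((dv - 2 : ℕ) : ℝ)+1) • ContinuousLinearMap.id ℝ (Fin (m+1) → ℝ)))).comp (Tlin m)

lemma hasFDerivAt_fFun (m dv : ℕ) (ε : ℝ) (s : Fin m) :
    HasFDerivAt (fun y => fFun m dv ε y s) (Lder m dv ε s) (fun _ => (1:ℝ)) := by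
  have h1 : HasFDerivAt (tilde m) (Tlin m) (fun _ => (1:ℝ)) := hasFDerivAt_tilde m _
  have h2 : HasFDerivAt (boxdotPow m (dv-2))
      ((((dv - 2 : ℕ) : ℝ)+1) • ContinuousLinearMap.id ℝ (Fin (m+1) → ℝ))
      (tilde m (fun _ => 1)) := by
    rw [tilde_one]
    exact hasFDerivAt_boxdotPow m (dv-2)
  have h3 := h2.comp (fun _ => (1:ℝ)) h1
  have h4 := ((Bp m ε).hasFDerivAt).comp (fun _ => (1:ℝ)) h3
  have h5 := ((Ssum m s).hasFDerivAt).comp (fun _ => (1:ℝ)) h4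
  have : (fun y => fFun m dv ε y s)
      = (Ssum m s ∘ (Bp m ε ∘ fun y => boxdotPow m (dv-2) (tilde m y))) := by
    funext y
    simp only [Function.comp_apply, fFun, Ssum_apply, Bp_apply]
    rfl
  rw [this]
  exact h5

lemma sum_if_eq_val (m : ℕ) (c : ℕ) (hc : c < m+1) (f : Fin (m+1) → ℝ) :
    ∑ k : Fin (m+1), (if (k:ℕ) = c then f k else 0) = f ⟨c, hc⟩ := by
  rw [Finset.sum_eq_single (⟨c, hc⟩ : Fin (m+1))]
  · simp
  · intro b _ hb
    rw [if_neg (fun h => hb (Fin.ext h))]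
  · simp

lemma sum_if_ge (m : ℕ) (hm : 1 ≤ m) (f : Fin (m+1) → ℝ) :
    ∑ k : Fin (m+1), (if m - 1 ≤ (k:ℕ) then f k else 0)
      = f ⟨m-1, by omega⟩ + f ⟨m, by omega⟩ := by
  have hstep : ∀ k : Fin (m+1), (if m - 1 ≤ (k:ℕ) then f k else 0)
      = (if (k:ℕ) = m-1 then f k else 0) + (if (k:ℕ) = m then f k else 0) := by
    intro k
    have hk : (k:ℕ) < m+1 := k.isLt
    by_cases h1 : (k:ℕ) = m-1
    · rw [if_pos (by omega), if_pos h1, if_neg (by omega)]; ring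
    · by_cases h2 : (k:ℕ) = m
      · rw [if_pos (by omega), if_neg h1, if_pos h2]; ring
      · rw [if_neg (by omega), if_neg h1, if_neg h2]; ring
  rw [Finset.sum_congr rfl fun k _ => hstep k, Finset.sum_add_distrib,
    sum_if_eq_val m (m-1) (by omega) f, sum_if_eq_val m m (by omega) f]

lemma sum_if_ge_top (m : ℕ) (f : Fin (m+1) → ℝ) :
    ∑ k : Fin (m+1), (if m ≤ (k:ℕ) then f k else 0) = f ⟨m, by omega⟩ := by
  have hstep : ∀ k : Fin (m+1), (if m ≤ (k:ℕ) then f k else 0)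
      = (if (k:ℕ) = m then f k else 0) := by
    intro k
    have hk : (k:ℕ) < m+1 := k.isLt
    by_cases h2 : (k:ℕ) = m
    · rw [if_pos (by omega), if_pos h2]
    · rw [if_neg (by omega), if_neg h2]
  rw [Finset.sum_congr rfl fun k _ => hstep k, sum_if_eq_val m m (by omega) f]

lemma dex_single (m : ℕ) (τ : Fin m) (j : ℕ) :
    dex m j (Pi.single τ (1:ℝ)) = if j = (τ:ℕ)+1 then 1 else 0 := by
  unfold dex
  by_cases h : 1 ≤ j ∧ j ≤ m
  · rw [dif_pos h]
    simp only [ContinuousLinearMap.proj_apply]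
    by_cases hj : j = (τ:ℕ)+1
    · rw [if_pos hj]
      have he : (⟨j-1, by omega⟩ : Fin m) = τ := Fin.ext (by simp; omega)
      rw [he, Pi.single_eq_same]
    · rw [if_neg hj]
      refine Pi.single_eq_of_ne (fun hh => hj ?_) 1
      have := congrArg Fin.val hh
      simp at this
      omega
  · rw [dif_neg h]
    rw [if_neg (by omega)]
    rfl

lemma Tlin_single (m : ℕ) (τ : Fin m) (j : Fin (m+1)) :
    Tlin m (Pi.single τ (1:ℝ)) j =
      (if (j:ℕ) = (τ:ℕ)+1 then (1:ℝ) else 0) - (if (j:ℕ) = (τ:ℕ) then 1 else 0) := by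
  simp only [Tlin, ContinuousLinearMap.pi_apply, ContinuousLinearMap.sub_apply]
  rw [dex_single, dex_single]
  congr 1
  by_cases h : (j:ℕ) = (τ:ℕ)
  · rw [if_pos (by omega), if_pos h]
  · rw [if_neg (by omega), if_neg h]

lemma Bp_Tlin_single (m : ℕ) (ε : ℝ) (τ : Fin m) (k : Fin (m+1)) :
    Bp m ε (Tlin m (Pi.single τ (1:ℝ))) k
      = ∑ i : Fin (m+1), pcirc m ε i *
          (Vprob m i ((τ:ℕ)+1) k - Vprob m i (τ:ℕ) k) := by
  rw [Bp_apply]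
  unfold boxdot
  refine Finset.sum_congr rfl fun i _ => ?_
  have hstep : ∀ j : Fin (m+1),
      Vprob m i j k * pcirc m ε i * Tlin m (Pi.single τ (1:ℝ)) j
        = (if (j:ℕ) = (τ:ℕ)+1 then Vprob m i ((τ:ℕ)+1) k * pcirc m ε i else 0)
          - (if (j:ℕ) = (τ:ℕ) then Vprob m i (τ:ℕ) k * pcirc m ε i else 0) := by
    intro j
    rw [Tlin_single]
    by_cases h1 : (j:ℕ) = (τ:ℕ)+1
    · rw [if_pos h1, if_neg (by omega), if_pos h1, if_neg (by omega), h1]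
      ring
    · by_cases h2 : (j:ℕ) = (τ:ℕ)
      · rw [if_neg h1, if_pos h2, if_neg h1, if_pos h2, h2]
        ring
      · rw [if_neg h1, if_neg h2, if_neg h1, if_neg h2]
        ring
  rw [Finset.sum_congr rfl fun j _ => hstep j, Finset.sum_sub_distrib,
    sum_if_eq_val m ((τ:ℕ)+1) (by omega) _, sum_if_eq_val m (τ:ℕ) (by omega) _]
  ring

lemma Lder_single (m dv : ℕ) (ε : ℝ) (s τ : Fin m) :
    Lder m dv ε s (Pi.single τ (1:ℝ))
      = (((dv - 2 : ℕ) : ℝ)+1) * ∑ k : Fin (m+1),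
          (if (s:ℕ)+1 ≤ (k:ℕ) then
            ∑ i : Fin (m+1), pcirc m ε i *
              (Vprob m i ((τ:ℕ)+1) k - Vprob m i (τ:ℕ) k) else 0) := by
  simp only [Lder, ContinuousLinearMap.comp_apply, ContinuousLinearMap.smul_apply,
    ContinuousLinearMap.id_apply, map_smul, smul_eq_mul]
  rw [Ssum_apply]
  congr 1
  refine Finset.sum_congr rfl fun k _ => ?_
  by_cases h : (s:ℕ)+1 ≤ (k:ℕ)
  · rw [if_pos h, if_pos h, Bp_Tlin_single]
  · rw [if_neg h, if_neg h]

lemma Lder_ts (m dv : ℕ) (hm : 2 ≤ m) (ε : ℝ) :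
    Lder m dv ε ⟨m-1, by omega⟩ (Pi.single (⟨m-2, by omega⟩ : Fin m) (1:ℝ)) = 0 := by
  rw [Lder_single]
  have hrw : ∀ k : Fin (m+1),
      (if ((⟨m-1, by omega⟩ : Fin m) : ℕ)+1 ≤ (k:ℕ) then
        ∑ i : Fin (m+1), pcirc m ε i *
          (Vprob m i (((⟨m-2, by omega⟩ : Fin m) : ℕ)+1) k
            - Vprob m i ((⟨m-2, by omega⟩ : Fin m) : ℕ) k) else 0)
      = (if m ≤ (k:ℕ) then
        ∑ i : Fin (m+1), pcirc m ε i *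
          (Vprob m i (m-1) k - Vprob m i (m-2) k) else 0) := by
    intro k
    simp only [Fin.val_mk]
    have h1 : m - 2 + 1 = m-1 := by omega
    have h2 : (m - 1 + 1 ≤ (k:ℕ)) = (m ≤ (k:ℕ)) := by
      apply propext; constructor <;> intro <;> omega
    simp only [h1, h2]
  rw [Finset.sum_congr rfl fun k _ => hrw k, sum_if_ge_top]
  have hz : ∀ i : Fin (m+1), pcirc m ε i *
      (Vprob m i (m-1) ((⟨m, by omega⟩ : Fin (m+1)) : ℕ)
        - Vprob m i (m-2) ((⟨m, by omega⟩ : Fin (m+1)) : ℕ)) = 0 := by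
    intro i
    simp only [Fin.val_mk]
    rw [Vprob_high m i (m-1) m (by omega), Vprob_high m i (m-2) m (by omega)]
    ring
  rw [Finset.sum_congr rfl fun i _ => hz i]
  simp

lemma Lder_st (m dv : ℕ) (hm : 2 ≤ m) (ε : ℝ) :
    Lder m dv ε ⟨m-2, by omega⟩ (Pi.single (⟨m-1, by omega⟩ : Fin m) (1:ℝ))
      = (((dv - 2 : ℕ) : ℝ)+1) *
          (pcirc m ε ⟨m-1, by omega⟩ * (1 - ((numDim m (m-1) : ℝ))⁻¹)) := by
  rw [Lder_single]
  have hrw : ∀ k : Fin (m+1),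
      (if ((⟨m-2, by omega⟩ : Fin m) : ℕ)+1 ≤ (k:ℕ) then
        ∑ i : Fin (m+1), pcirc m ε i *
          (Vprob m i (((⟨m-1, by omega⟩ : Fin m) : ℕ)+1) k
            - Vprob m i ((⟨m-1, by omega⟩ : Fin m) : ℕ) k) else 0)
      = (if m - 1 ≤ (k:ℕ) then
        ∑ i : Fin (m+1), pcirc m ε i *
          (Vprob m i m k - Vprob m i (m-1) k) else 0) := by
    intro k
    simp only [Fin.val_mk]
    have h1 : m - 1 + 1 = m := by omega
    have h2 : (m - 2 + 1 ≤ (k:ℕ)) = (m - 1 ≤ (k:ℕ)) := by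
      apply propext; constructor <;> intro <;> omega
    simp only [h1, h2]
  rw [Finset.sum_congr rfl fun k _ => hrw k, sum_if_ge m (by omega)]
  have hfm : ∑ i : Fin (m+1), pcirc m ε i *
      (Vprob m i m ((⟨m, by omega⟩ : Fin (m+1)) : ℕ)
        - Vprob m i (m-1) ((⟨m, by omega⟩ : Fin (m+1)) : ℕ))
      = pcirc m ε ⟨m, by omega⟩ := by
    have hstep : ∀ i : Fin (m+1), pcirc m ε i *
        (Vprob m i m ((⟨m, by omega⟩ : Fin (m+1)) : ℕ)
          - Vprob m i (m-1) ((⟨m, by omega⟩ : Fin (m+1)) : ℕ))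
        = if (i:ℕ) = m then pcirc m ε i else 0 := by
      intro i
      simp only [Fin.val_mk]
      rw [Vprob_high m i (m-1) m (by omega), Vprob_full m i m (by omega)]
      split_ifs with h1 h2 h3 <;> first | ring1 | (exfalso; omega)
    rw [Finset.sum_congr rfl fun i _ => hstep i, sum_if_eq_val m m (by omega)]
  have hfm1 : ∑ i : Fin (m+1), pcirc m ε i *
      (Vprob m i m ((⟨m-1, by omega⟩ : Fin (m+1)) : ℕ)
        - Vprob m i (m-1) ((⟨m-1, by omega⟩ : Fin (m+1)) : ℕ))
      = pcirc m ε ⟨m-1, by omega⟩ - pcirc m ε ⟨m, by omega⟩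
        - pcirc m ε ⟨m-1, by omega⟩ * ((numDim m (m-1) : ℝ))⁻¹ := by
    have hstep : ∀ i : Fin (m+1), pcirc m ε i *
        (Vprob m i m ((⟨m-1, by omega⟩ : Fin (m+1)) : ℕ)
          - Vprob m i (m-1) ((⟨m-1, by omega⟩ : Fin (m+1)) : ℕ))
        = (if (i:ℕ) = m-1 then pcirc m ε i else 0)
          - ((if (i:ℕ) = m then pcirc m ε i else 0)
            + (if (i:ℕ) = m-1 then pcirc m ε i * ((numDim m (m-1) : ℝ))⁻¹ else 0)) := by
      intro i
      simp only [Fin.val_mk]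
      rw [Vprob_full m i (m-1) (by omega), Vprob_m1 m i hm (by omega)]
      split_ifs with h1 h2 h3 h4 h5 h6 h7 <;> first | ring1 | (exfalso; omega)
    rw [Finset.sum_congr rfl fun i _ => hstep i, Finset.sum_sub_distrib,
      Finset.sum_add_distrib, sum_if_eq_val m (m-1) (by omega),
      sum_if_eq_val m m (by omega), sum_if_eq_val m (m-1) (by omega)]
    ring
  rw [hfm, hfm1]
  ring

def Rclm (m : ℕ) : (Fin m → ℝ) →L[ℝ] ((Fin m → ℝ) →L[ℝ] ℝ) :=
  ∑ s : Fin m, (ContinuousLinearMap.proj s : (Fin m → ℝ) →L[ℝ] ℝ).smulRight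
    (ContinuousLinearMap.proj s : (Fin m → ℝ) →L[ℝ] ℝ)

lemma Rclm_apply (m : ℕ) (c : Fin m → ℝ) : Rclm m c = rowDeriv m c := by
  simp only [Rclm, rowDeriv, ContinuousLinearMap.sum_apply,
    ContinuousLinearMap.smulRight_apply, ContinuousLinearMap.proj_apply]

def Phi (m dv : ℕ) (ε : ℝ) (d : Fin m → ℝ) :
    (Fin m → ℝ) →L[ℝ] ((Fin m → ℝ) →L[ℝ] ℝ) :=
  (Rclm m).comp (ContinuousLinearMap.pi (R := ℝ) (fun σ : Fin m => d σ • Lder m dv ε σ))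

lemma hasFDerivAt_phi (m dv : ℕ) (ε : ℝ) (d : Fin m → ℝ) :
    HasFDerivAt (fun y => rowDeriv m (fun σ => fFun m dv ε y σ * d σ))
      (Phi m dv ε d) (fun _ => (1:ℝ)) := by
  have hinner : HasFDerivAt (fun y => (fun σ => fFun m dv ε y σ * d σ))
      (ContinuousLinearMap.pi (R := ℝ) (fun σ : Fin m => d σ • Lder m dv ε σ))
      (fun _ => (1:ℝ)) := by
    apply hasFDerivAt_pi''
    intro σ
    rw [ContinuousLinearMap.proj_pi]
    exact (hasFDerivAt_fFun m dv ε σ).mul_const (d σ)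
  have h := (Rclm m).hasFDerivAt.comp (fun _ : Fin m => (1:ℝ)) hinner
  have heq : (fun y => rowDeriv m (fun σ => fFun m dv ε y σ * d σ))
      = (Rclm m) ∘ (fun y => (fun σ => fFun m dv ε y σ * d σ)) := by
    funext y
    rw [Function.comp_apply, Rclm_apply]
  rw [heq]
  exact h

lemma Phi_single (m dv : ℕ) (ε : ℝ) (d : Fin m → ℝ) (v : Fin m → ℝ) (s : Fin m) :
    Phi m dv ε d v (Pi.single s (1:ℝ)) = d s * Lder m dv ε s v := by
  simp only [Phi, ContinuousLinearMap.comp_apply]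
  rw [Rclm_apply]
  simp only [rowDeriv, ContinuousLinearMap.sum_apply, ContinuousLinearMap.smul_apply,
    ContinuousLinearMap.proj_apply, ContinuousLinearMap.pi_apply, smul_eq_mul]
  rw [Finset.sum_eq_single s]
  · rw [Pi.single_eq_same]; ring
  · intro b _ hb
    rw [Pi.single_eq_of_ne hb]
    ring
  · simp

lemma Yset_convex (m : ℕ) : Convex ℝ (Yset m) := by
  intro x hx y hy a b ha hb hab
  intro i
  have h1 := hx i
  have h2 := hy i
  constructor
  · have := add_nonneg (mul_nonneg ha h1.1) (mul_nonneg hb h2.1)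
    simpa using this
  · have : a * x i + b * y i ≤ a * 1 + b * 1 := by
      gcongr
      exacts [h1.2, h2.2]
    simpa [hab] using this

lemma Yset_int_nonempty (m : ℕ) : (interior (Yset m)).Nonempty := by
  refine ⟨fun _ => 1/2, ?_⟩
  rw [mem_interior]
  refine ⟨Set.pi Set.univ (fun _ : Fin m => Set.Ioo (0:ℝ) 1), ?_, ?_, ?_⟩
  · intro z hz i
    have := hz i (Set.mem_univ i)
    exact ⟨le_of_lt this.1, le_of_lt this.2⟩
  · exact isOpen_set_pi Set.finite_univ (fun i _ => isOpen_Ioo)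
  · intro i _
    constructor <;> norm_num

lemma one_mem_Yset (m : ℕ) : (fun _ => (1:ℝ)) ∈ Yset m :=
  fun i => ⟨zero_le_one, le_refl 1⟩

/-- **Proposition 1: nonexistence for diagonal `D`.** For `m ≥ 2` and
`ε ∈ (0,1)`, there is no diagonal matrix `D` with strictly positive diagonal entries
admitting differentiable `F, G` with gradients `f(·; ε)·D` and `g(·)·D` on `Y`. -/
theorem no_diagonal_D (m dv dc : ℕ) (hm : 2 ≤ m) (hdv : 2 ≤ dv) (hdc : 2 ≤ dc)
    (ε : ℝ) (hε0 : 0 < ε) (hε1 : ε < 1) :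
    ¬ ∃ (d : Fin m → ℝ) (F G : (Fin m → ℝ) → ℝ),
        (∀ i, 0 < d i) ∧ F 0 = 0 ∧ G 0 = 0 ∧
        (∀ y ∈ Yset m,
          HasFDerivAt F (rowDeriv m (fun s => fFun m dv ε y s * d s)) y) ∧
        (∀ x ∈ Yset m,
          HasFDerivAt G (rowDeriv m (fun s => gFun m dc x s * d s)) x) := by
  rintro ⟨d, F, G, hd, hF0, hG0, hF, hG⟩
  have hsymm := (Yset_convex m).second_derivative_within_at_symmetric
    (Yset_int_nonempty m)
    (f := F) (f' := fun y => rowDeriv m (fun σ => fFun m dv ε y σ * d σ))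
    (f'' := Phi m dv ε d)
    (fun z hz => hF z (interior_subset hz))
    (one_mem_Yset m)
    ((hasFDerivAt_phi m dv ε d).hasFDerivWithinAt)
    (Pi.single (⟨m-1, by omega⟩ : Fin m) (1:ℝ))
    (Pi.single (⟨m-2, by omega⟩ : Fin m) (1:ℝ))
  rw [Phi_single, Phi_single, Lder_st m dv hm ε, Lder_ts m dv hm ε] at hsymm
  have hd1 : 0 < d ⟨m-2, by omega⟩ := hd _
  have hp : 0 < pcirc m ε ⟨m-1, by omega⟩ := by
    unfold pcirc
    have hc : 0 < (m.choose (((⟨m-1, by omega⟩ : Fin (m+1)) : ℕ)) : ℝ) := by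
      have := Nat.choose_pos (show ((⟨m-1, by omega⟩ : Fin (m+1)) : ℕ) ≤ m by
        simp only [Fin.val_mk]; omega)
      exact_mod_cast this
    have h1 : (0:ℝ) < ε ^ (((⟨m-1, by omega⟩ : Fin (m+1)) : ℕ)) := pow_pos hε0 _
    have h2 : (0:ℝ) < (1-ε) ^ (m - ((⟨m-1, by omega⟩ : Fin (m+1)) : ℕ)) :=
      pow_pos (by linarith) _
    positivity
  have hD : (2:ℝ) ≤ (numDim m (m-1) : ℝ) := by
    exact_mod_cast numDim_two m hm
  have hDinv : ((numDim m (m-1) : ℝ))⁻¹ < 1 := by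
    rw [inv_lt_one_iff₀]
    right
    linarith
  have hpos : 0 < (((dv - 2 : ℕ) : ℝ)+1) *
      (pcirc m ε ⟨m-1, by omega⟩ * (1 - ((numDim m (m-1) : ℝ))⁻¹)) := by
    have h1 : (0:ℝ) < ((dv - 2 : ℕ) : ℝ)+1 := by positivity
    have h2 : (0:ℝ) < 1 - ((numDim m (m-1) : ℝ))⁻¹ := by linarith
    positivity
  nlinarith [mul_pos hd1 hpos]

end
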